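/- There exists a skew-Bush-type Hadamard matrix of order 4n² if and only if there exists a doubly regular asymmetric digraph with parameters (4n², 2n²−n, n²−n) whose vertex set can be decomposed into 2n disjoint cocliques of size 2n. -/

import Mathlib

open Matrix Finset

private lemma drad_sum_fiber {N : ℕ} (c : Fin N) (f : Fin N × Fin N → ℝ) :
    ∑ y : Fin N × Fin N, (if y.1 = c then f y else 0) = ∑ b, f (c, b) := by
  rw [Fintype.sum_prod_type]
  have h : ∀ j : Fin N, (∑ b, if (j, b).1 = c then f (j, b) else 0)
      = if j = c then ∑ b, f (j, b) else 0 := by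
    intro j; split <;> simp_all
  rw [Finset.sum_congr rfl fun j _ => h j, Finset.sum_ite_eq' univ c]
  simp

private lemma drad_sum_cofiber {N : ℕ} (c : Fin N) :
    ∑ y : Fin N × Fin N, (if y.1 = c then (0:ℝ) else 1) = (N:ℝ) * N - N := by
  have h : ∀ y : Fin N × Fin N, (if y.1 = c then (0:ℝ) else 1)
      = 1 - (if y.1 = c then (1:ℝ) else 0) := by
    intro y; split <;> norm_num
  rw [Finset.sum_congr rfl fun y _ => h y, Finset.sum_sub_distrib, drad_sum_fiber]
  simp [Finset.card_univ]


private theorem drad_aux_fwd (n : ℕ) (hn : 0 < n) :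
    (∃ H : Matrix (Fin (2 * n) × Fin (2 * n)) (Fin (2 * n) × Fin (2 * n)) ℝ,
      (∀ x y, H x y = 1 ∨ H x y = -1) ∧
      (H * Hᵀ = ((4 * n ^ 2 : ℝ)) • 1) ∧
      (∀ (i : Fin (2 * n)) (a b : Fin (2 * n)), H (i, a) (i, b) = 1) ∧
      (∀ i j : Fin (2 * n), i ≠ j →
        (∀ a, ∑ b, H (i, a) (j, b) = 0) ∧ (∀ b, ∑ a, H (i, a) (j, b) = 0)) ∧
      (∀ x y : Fin (2 * n) × Fin (2 * n), x.1 ≠ y.1 → H x y = -H y x)) →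
    (∃ A : Matrix (Fin (2 * n) × Fin (2 * n)) (Fin (2 * n) × Fin (2 * n)) ℝ,
      (∀ x y, A x y = 0 ∨ A x y = 1) ∧
      (∀ x, A x x = 0) ∧
      (∀ x y, A x y + A y x = 0 ∨ A x y + A y x = 1) ∧
      (A * Aᵀ = ((2 * n ^ 2 - n : ℝ)) • 1
        + ((n ^ 2 - n : ℝ)) • ((Matrix.of fun _ _ => (1 : ℝ)) - 1)) ∧
      (∃ part : Fin (2 * n) × Fin (2 * n) → Fin (2 * n),
        (∀ c, (Finset.univ.filter (fun x => part x = c)).card = 2 * n) ∧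
        (∀ x y, part x = part y → A x y = 0))) := by
  rintro ⟨H, hpm, hHH, hdiag, hblock, hskew⟩
  -- H is 1 on diagonal blocks
  have hdiag' : ∀ x y : Fin (2 * n) × Fin (2 * n), x.1 = y.1 → H x y = 1 := by
    rintro ⟨i, a⟩ ⟨j, b⟩ h
    simp only at h; subst h; exact hdiag i a b
  -- row sums of H
  have hrow : ∀ x : Fin (2 * n) × Fin (2 * n), ∑ z, H x z = 2 * n := by
    rintro ⟨i, a⟩
    rw [Fintype.sum_prod_type]
    have h : ∀ j : Fin (2 * n), (∑ b, H (i, a) (j, b)) = if j = i then (2 * n : ℝ) else 0 := by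
      intro j
      by_cases hji : j = i
      · subst hji
        simp [hdiag j a, Finset.card_univ]
      · rw [if_neg hji]; exact (hblock i j (Ne.symm hji)).1 a
    rw [Finset.sum_congr rfl fun j _ => h j, Finset.sum_ite_eq' univ i]
    simp
  have hHHe : ∀ x y, (∑ z, H x z * H y z) = if x = y then (4 * n ^ 2 : ℝ) else 0 := by
    intro x y
    have := congrFun (congrFun hHH x) y
    rw [Matrix.mul_apply] at this
    simp only [Matrix.transpose_apply] at this
    rw [this]
    simp [Matrix.smul_apply, Matrix.one_apply, mul_ite]
  refine ⟨Matrix.of fun x y => (1 - H x y) / 2, ?_, ?_, ?_, ?_, Prod.fst, ?_, ?_⟩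
  · intro x y
    rcases hpm x y with h | h <;> simp [h] <;> norm_num
  · intro x
    simp [hdiag' x x rfl]
  · intro x y
    by_cases h : x.1 = y.1
    · left; simp [hdiag' x y h, hdiag' y x h.symm]
    · right; simp only [Matrix.of_apply]; rw [hskew x y h]; ring
  · ext x y
    rw [Matrix.mul_apply]
    simp only [Matrix.transpose_apply, Matrix.of_apply]
    have expand : ∀ z, (1 - H x z) / 2 * ((1 - H y z) / 2)
        = (1 - H x z - H y z + H x z * H y z) / 4 := by intro z; ring
    rw [Finset.sum_congr rfl fun z _ => expand z, ← Finset.sum_div,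
      Finset.sum_add_distrib, Finset.sum_sub_distrib, Finset.sum_sub_distrib,
      hrow x, hrow y, hHHe x y]
    have hcard : ∑ _z : Fin (2 * n) × Fin (2 * n), (1 : ℝ) = (2 * n : ℝ) * (2 * n) := by
      simp [Finset.card_univ]
      try ring
    rw [hcard]
    simp only [Matrix.add_apply, Matrix.smul_apply, Matrix.sub_apply, Matrix.of_apply,
      Matrix.one_apply, smul_eq_mul]
    split <;> ring
  · intro c
    have : (univ.filter fun x : Fin (2 * n) × Fin (2 * n) => x.1 = c)
        = ({c} : Finset (Fin (2 * n))) ×ˢ univ := by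
      ext p
      simp only [Finset.mem_filter, Finset.mem_univ, true_and, Finset.mem_product,
        Finset.mem_singleton, and_true]
    rw [this, Finset.card_product]
    simp
  · intro x y h
    simp [hdiag' x y h]

private theorem drad_aux_rev (n : ℕ) (hn : 0 < n) :
    (∃ A : Matrix (Fin (2 * n) × Fin (2 * n)) (Fin (2 * n) × Fin (2 * n)) ℝ,
      (∀ x y, A x y = 0 ∨ A x y = 1) ∧
      (∀ x, A x x = 0) ∧
      (∀ x y, A x y + A y x = 0 ∨ A x y + A y x = 1) ∧
      (A * Aᵀ = ((2 * n ^ 2 - n : ℝ)) • 1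
        + ((n ^ 2 - n : ℝ)) • ((Matrix.of fun _ _ => (1 : ℝ)) - 1)) ∧
      (∃ part : Fin (2 * n) × Fin (2 * n) → Fin (2 * n),
        (∀ c, (Finset.univ.filter (fun x => part x = c)).card = 2 * n) ∧
        (∀ x y, part x = part y → A x y = 0))) →
    (∃ H : Matrix (Fin (2 * n) × Fin (2 * n)) (Fin (2 * n) × Fin (2 * n)) ℝ,
      (∀ x y, H x y = 1 ∨ H x y = -1) ∧
      (H * Hᵀ = ((4 * n ^ 2 : ℝ)) • 1) ∧
      (∀ (i : Fin (2 * n)) (a b : Fin (2 * n)), H (i, a) (i, b) = 1) ∧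
      (∀ i j : Fin (2 * n), i ≠ j →
        (∀ a, ∑ b, H (i, a) (j, b) = 0) ∧ (∀ b, ∑ a, H (i, a) (j, b) = 0)) ∧
      (∀ x y : Fin (2 * n) × Fin (2 * n), x.1 ≠ y.1 → H x y = -H y x)) := by
  rintro ⟨A, h01, hAdiag, hs01, hAAT, part, hcard, hco⟩
  -- reindex the vertices so that the partition becomes `Prod.fst`
  let e : ∀ i : Fin (2 * n),
      Fin (2 * n) ≃ {x // x ∈ Finset.univ.filter (fun x : Fin (2 * n) × Fin (2 * n) => part x = i)} :=
    fun i => (Finset.equivFinOfCardEq (hcard i)).symm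
  let g : Fin (2 * n) × Fin (2 * n) → Fin (2 * n) × Fin (2 * n) := fun p => ((e p.1) p.2 : _)
  have hgpart : ∀ p, part (g p) = p.1 := by
    intro p
    exact (Finset.mem_filter.mp ((e p.1) p.2).2).2
  have hginj : Function.Injective g := by
    intro p q h
    have h1 : p.1 = q.1 := by rw [← hgpart p, ← hgpart q, h]
    obtain ⟨p1, p2⟩ := p; obtain ⟨q1, q2⟩ := q
    simp only at h1; subst h1
    have h2 : p2 = q2 := (e p1).injective (Subtype.ext h)
    rw [h2]
  have hgbij : Function.Bijective g := Finite.injective_iff_bijective.mp hginj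
  set M : Fin (2 * n) × Fin (2 * n) → Fin (2 * n) × Fin (2 * n) → ℝ :=
    fun x y => A (g x) (g y) with hMdef
  have hM01 : ∀ x y, M x y = 0 ∨ M x y = 1 := fun x y => h01 _ _
  have hM0 : ∀ x y, x.1 = y.1 → M x y = 0 := by
    intro x y h
    exact hco _ _ (by rw [hgpart, hgpart, h])
  have hMs : ∀ x y, M x y + M y x = 0 ∨ M x y + M y x = 1 := fun x y => hs01 _ _
  have hMM : ∀ x y, (∑ z, M x z * M y z)
      = if x = y then (2 * (n:ℝ) ^ 2 - n) else ((n:ℝ) ^ 2 - n) := by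
    intro x y
    have h := congrFun (congrFun hAAT (g x)) (g y)
    rw [Matrix.mul_apply] at h
    simp only [Matrix.transpose_apply] at h
    have hre : (∑ z, M x z * M y z) = ∑ w, A (g x) w * A (g y) w :=
      Equiv.sum_comp (Equiv.ofBijective g hgbij) (fun w => A (g x) w * A (g y) w)
    rw [hre, h]
    simp only [Matrix.add_apply, Matrix.smul_apply, Matrix.sub_apply, Matrix.of_apply,
      Matrix.one_apply, smul_eq_mul, hginj.eq_iff]
    split <;> ring

  -- row sums
  have hrowM : ∀ x, (∑ z, M x z) = 2 * (n:ℝ) ^ 2 - n := by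
    intro x
    have h := hMM x x
    rw [if_pos rfl] at h
    rw [← h]
    refine Finset.sum_congr rfl fun z _ => ?_
    rcases hM01 x z with h0 | h0 <;> rw [h0] <;> ring
  -- cross pairs carry exactly one arc
  have hcross : ∀ x y, x.1 ≠ y.1 → M x y + M y x = 1 := by
    intro x y hxy
    set F : Fin (2 * n) × Fin (2 * n) → Fin (2 * n) × Fin (2 * n) → ℝ :=
      fun x y => if x.1 = y.1 then 0 else 1 - M x y - M y x with hFdef
    have hFnn : ∀ x y, 0 ≤ F x y := by
      intro x y
      simp only [hFdef]
      split
      · exact le_refl 0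
      · rcases hMs x y with h | h <;> linarith
    have hFeq : ∀ x y, F x y = (if x.1 = y.1 then (0:ℝ) else 1) - M x y - M y x := by
      intro x y
      by_cases h : x.1 = y.1
      · simp [hFdef, h, hM0 x y h, hM0 y x h.symm]
      · simp [hFdef, h]
    have h1 : ∀ x : Fin (2 * n) × Fin (2 * n), (∑ y, F x y)
        = ((2*n:ℝ) * (2*n) - 2*n) - (2 * (n:ℝ) ^ 2 - n) - ∑ y, M y x := by
      intro x
      rw [Finset.sum_congr rfl fun y _ => hFeq x y,
        Finset.sum_sub_distrib, Finset.sum_sub_distrib, hrowM x]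
      have : (∑ y : Fin (2 * n) × Fin (2 * n), if x.1 = y.1 then (0:ℝ) else 1)
          = (2*n:ℝ) * (2*n) - 2*n := by
        have hpt : ∀ y : Fin (2 * n) × Fin (2 * n),
            (if x.1 = y.1 then (0:ℝ) else 1) = (if y.1 = x.1 then (0:ℝ) else 1) := by
          intro y; simp [eq_comm]
        rw [Finset.sum_congr rfl fun y _ => hpt y, drad_sum_cofiber]
        push_cast; ring
      rw [this]
    have hsum : (∑ x, ∑ y, F x y) = 0 := by
      rw [Finset.sum_congr rfl fun x _ => h1 x, Finset.sum_sub_distrib, Finset.sum_comm,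
        Finset.sum_congr rfl fun y _ => hrowM y]
      simp only [Finset.sum_const, Finset.card_univ, Fintype.card_prod, Fintype.card_fin,
        nsmul_eq_mul]
      push_cast; ring
    have hF0 : F x y = 0 := by
      have houter := (Finset.sum_eq_zero_iff_of_nonneg
        (fun x _ => Finset.sum_nonneg fun y _ => hFnn x y)).mp hsum x (Finset.mem_univ x)
      exact (Finset.sum_eq_zero_iff_of_nonneg (fun y _ => hFnn x y)).mp houter y (Finset.mem_univ y)
    simp only [hFdef, if_neg hxy] at hF0
    linarith
  -- column block sums
  have hcol : ∀ (c : Fin (2 * n)) (z : Fin (2 * n) × Fin (2 * n)), z.1 ≠ c →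
      (∑ y, if y.1 = c then M y z else 0) = n := by
    intro c
    set E : Fin (2 * n) × Fin (2 * n) → ℝ :=
      fun z => ∑ y, if y.1 = c then M y z else 0 with hEdef
    have hE0 : ∀ z, z.1 = c → E z = 0 := by
      intro z hz
      refine Finset.sum_eq_zero fun y _ => ?_
      split
      · next hy => exact hM0 y z (by rw [hy, hz])
      · rfl
    have hS1 : (∑ z, E z) = 2 * n * (2 * (n:ℝ) ^ 2 - n) := by
      simp only [hEdef]
      rw [Finset.sum_comm]
      have hin : ∀ y : Fin (2 * n) × Fin (2 * n),
          (∑ z, if y.1 = c then M y z else 0) = if y.1 = c then (2 * (n:ℝ)^2 - n) else 0 := by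
        intro y
        split
        · exact hrowM y
        · simp
      rw [Finset.sum_congr rfl fun y _ => hin y, drad_sum_fiber]
      simp [Finset.card_univ]
      try ring
    have hS2 : (∑ z, E z ^ 2) = 4 * (n:ℝ)^4 - 2 * (n:ℝ)^3 := by
      have hexp : ∀ z, E z ^ 2 = ∑ y, ∑ w, ((if y.1 = c then M y z else 0)
          * (if w.1 = c then M w z else 0)) := by
        intro z
        rw [hEdef, sq, Finset.sum_mul_sum]
      rw [Finset.sum_congr rfl fun z _ => hexp z]
      rw [Finset.sum_comm]
      have hmid : ∀ y : Fin (2 * n) × Fin (2 * n),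
          (∑ z, ∑ w, ((if y.1 = c then M y z else 0) * (if w.1 = c then M w z else 0)))
          = if y.1 = c then (2 * n * ((n:ℝ)^2 - n) + ((2 * (n:ℝ)^2 - n) - ((n:ℝ)^2 - n)))
            else 0 := by
        intro y
        rw [Finset.sum_comm]
        have hw : ∀ w : Fin (2 * n) × Fin (2 * n),
            (∑ z, (if y.1 = c then M y z else 0) * (if w.1 = c then M w z else 0))
            = if y.1 = c then (if w.1 = c then
                (if y = w then (2 * (n:ℝ)^2 - n) else ((n:ℝ)^2 - n)) else 0) else 0 := by
          intro w
          by_cases hy : y.1 = c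
          · by_cases hwc : w.1 = c
            · simp only [if_pos hy, if_pos hwc]
              rw [← hMM y w]
            · simp [hy, hwc]
          · simp [hy]
        rw [Finset.sum_congr rfl fun w _ => hw w]
        by_cases hy : y.1 = c
        · simp only [if_pos hy]
          have hpt : ∀ w : Fin (2 * n) × Fin (2 * n),
              (if w.1 = c then (if y = w then (2 * (n:ℝ)^2 - n) else ((n:ℝ)^2 - n)) else 0)
              = (if w.1 = c then ((n:ℝ)^2 - n) else 0)
                + (if w = y then ((2 * (n:ℝ)^2 - n) - ((n:ℝ)^2 - n)) else 0) := by
            intro w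
            by_cases hwc : w.1 = c
            · by_cases hwy : w = y
              · subst hwy; simp [hwc]
              · have : ¬ y = w := fun h => hwy h.symm
                simp [hwc, hwy, this]
            · have hwy : ¬ w = y := by
                intro h; subst h; exact hwc hy
              simp [hwc, hwy]
          rw [Finset.sum_congr rfl fun w _ => hpt w, Finset.sum_add_distrib,
            drad_sum_fiber c (fun _ => ((n:ℝ)^2 - n)), Finset.sum_ite_eq' univ y]
          simp [Finset.card_univ]
          ring
        · simp [hy]
      rw [Finset.sum_congr rfl fun y _ => hmid y, drad_sum_fiber]
      simp only [Finset.sum_const, Finset.card_univ, Fintype.card_fin, nsmul_eq_mul]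
      push_cast; ring
    intro z hz
    have hfinal : (∑ z, if z.1 = c then (0:ℝ) else (E z - n)^2) = 0 := by
      have hpt : ∀ z : Fin (2 * n) × Fin (2 * n),
          (if z.1 = c then (0:ℝ) else (E z - n)^2)
          = E z ^ 2 - 2 * n * E z + n^2 * (if z.1 = c then (0:ℝ) else 1) := by
        intro z
        by_cases hzc : z.1 = c
        · simp [hzc, hE0 z hzc]
        · simp only [if_neg hzc]; ring
      rw [Finset.sum_congr rfl fun z _ => hpt z, Finset.sum_add_distrib,
        Finset.sum_sub_distrib, hS2, ← Finset.mul_sum, hS1, ← Finset.mul_sum, drad_sum_cofiber]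
      push_cast; ring
    have hz2 : (if z.1 = c then (0:ℝ) else (E z - n)^2) = 0 :=
      (Finset.sum_eq_zero_iff_of_nonneg (fun z _ => by positivity)).mp hfinal z (Finset.mem_univ z)
    rw [if_neg hz] at hz2
    have := pow_eq_zero_iff (n := 2) (by norm_num) |>.mp hz2
    have : E z = n := by linarith [sub_eq_zero.mp this]
    simpa [hEdef] using this
  -- row block sums
  have hrowb : ∀ (c : Fin (2 * n)) (x : Fin (2 * n) × Fin (2 * n)), x.1 ≠ c →
      (∑ y, if y.1 = c then M x y else 0) = n := by
    intro c x hx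
    have hpt : ∀ y : Fin (2 * n) × Fin (2 * n),
        (if y.1 = c then M x y else 0)
        = (if y.1 = c then (1:ℝ) else 0) - (if y.1 = c then M y x else 0) := by
      intro y
      by_cases hy : y.1 = c
      · simp only [if_pos hy]
        have hne : x.1 ≠ y.1 := by rw [hy]; exact hx
        have := hcross x y hne
        linarith
      · simp [hy]
    rw [Finset.sum_congr rfl fun y _ => hpt y, Finset.sum_sub_distrib, hcol c x hx,
      drad_sum_fiber]
    simp [Finset.card_univ]
    push_cast; ring
  -- construct the Hadamard matrix
  refine ⟨Matrix.of fun x y => 1 - 2 * M x y, ?_, ?_, ?_, ?_, ?_⟩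
  · intro x y
    rcases hM01 x y with h | h <;> simp [h] <;> norm_num
  · ext x y
    rw [Matrix.mul_apply]
    simp only [Matrix.transpose_apply, Matrix.of_apply]
    have hexp : ∀ z, (1 - 2 * M x z) * (1 - 2 * M y z)
        = 1 - 2 * M x z - 2 * M y z + 4 * (M x z * M y z) := by intro z; ring
    rw [Finset.sum_congr rfl fun z _ => hexp z, Finset.sum_add_distrib,
      Finset.sum_sub_distrib, Finset.sum_sub_distrib, ← Finset.mul_sum, ← Finset.mul_sum,
      ← Finset.mul_sum, hrowM x, hrowM y, hMM x y]
    simp only [Finset.sum_const, Finset.card_univ, Fintype.card_prod, Fintype.card_fin,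
      nsmul_eq_mul, Matrix.smul_apply, Matrix.one_apply, smul_eq_mul]
    split <;> push_cast <;> ring
  · intro i a b
    simp [hM0 (i, a) (i, b) rfl]
  · intro i j hij
    constructor
    · intro a
      have h := hrowb j (i, a) hij
      rw [drad_sum_fiber] at h
      simp only [Matrix.of_apply]
      rw [Finset.sum_sub_distrib, ← Finset.mul_sum, h]
      simp [Finset.card_univ]
      try push_cast
      try ring
    · intro b
      have h := hcol i (j, b) (Ne.symm hij)
      rw [drad_sum_fiber] at h
      simp only [Matrix.of_apply]
      rw [Finset.sum_sub_distrib, ← Finset.mul_sum, h]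
      simp [Finset.card_univ]
      try push_cast
      try ring
  · intro x y hxy
    simp only [Matrix.of_apply]
    have := hcross x y hxy
    linarith

/-- There exists a skew-Bush-type Hadamard matrix of order `4n²` if and only if
there exists a doubly regular asymmetric digraph with parameters
`(4n², 2n²-n, n²-n)` whose vertex set decomposes into `2n` disjoint cocliques of
size `2n`. Vertices are indexed by `Fin (2n) × Fin (2n)`. -/
theorem skew_bush_hadamard_iff_drad (n : ℕ) (hn : 0 < n) :
    (∃ H : Matrix (Fin (2 * n) × Fin (2 * n)) (Fin (2 * n) × Fin (2 * n)) ℝ,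
      (∀ x y, H x y = 1 ∨ H x y = -1) ∧
      (H * Hᵀ = ((4 * n ^ 2 : ℝ)) • 1) ∧
      (∀ (i : Fin (2 * n)) (a b : Fin (2 * n)), H (i, a) (i, b) = 1) ∧
      (∀ i j : Fin (2 * n), i ≠ j →
        (∀ a, ∑ b, H (i, a) (j, b) = 0) ∧ (∀ b, ∑ a, H (i, a) (j, b) = 0)) ∧
      (∀ x y : Fin (2 * n) × Fin (2 * n), x.1 ≠ y.1 → H x y = -H y x)) ↔
    (∃ A : Matrix (Fin (2 * n) × Fin (2 * n)) (Fin (2 * n) × Fin (2 * n)) ℝ,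
      (∀ x y, A x y = 0 ∨ A x y = 1) ∧
      (∀ x, A x x = 0) ∧
      (∀ x y, A x y + A y x = 0 ∨ A x y + A y x = 1) ∧
      (A * Aᵀ = ((2 * n ^ 2 - n : ℝ)) • 1
        + ((n ^ 2 - n : ℝ)) • ((Matrix.of fun _ _ => (1 : ℝ)) - 1)) ∧
      (∃ part : Fin (2 * n) × Fin (2 * n) → Fin (2 * n),
        (∀ c, (Finset.univ.filter (fun x => part x = c)).card = 2 * n) ∧
        (∀ x y, part x = part y → A x y = 0))) := by
  exact ⟨drad_aux_fwd n hn, drad_aux_rev n hn⟩
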